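/- Let p be a prime, n ≥ 2, m ≥ 1 an integer and 1 ≤ i ≤ n-1. Let g ∈ K_m have block form g = [[a,b],[c,d]] with a ∈ M_{n-1}(ℤ_p), b ∈ ℤ_p^{n-1} a column vector, c a row vector and d ∈ ℤ_p. Then g ∈ K_m ∩ ϖ^{f^i} K_m ϖ^{-f^i} if and only if a ∈ H ∩ 𝜛_i H 𝜛_i^{-1} and b ∈ L_i. -/

import Mathlib

/-!
Conventions: throughout, the paper's dimension `n ≥ 2` is represented as `n + 1`
where `n : ℕ` satisfies `n ≥ 1`; so matrices in the paper's `GL_n(ℚ_p)` are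
`(n+1) × (n+1)` matrices here, and tuples in the paper's `ℤ^{n-1}` are `f : Fin n → ℤ`.
Elements of `GL(ℚ_p)` are represented as square matrices `g` with `IsUnit g`.
-/

/-- `ψ : ℚ_p → ℂ` is an additive character with conductor `ℤ_p`: a continuous
homomorphism from `(ℚ_p, +)` to the unit circle in `ℂ`, trivial on `ℤ_p`
(the elements of norm at most `1`) but nontrivial on `p⁻¹ℤ_p`
(the elements of norm at most `p`). -/
structure IsAddCharCondZp (p : ℕ) [Fact p.Prime] (ψ : ℚ_[p] → ℂ) : Prop where
  map_add : ∀ x y, ψ (x + y) = ψ x * ψ y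
  continuous : Continuous ψ
  abs_eq_one : ∀ x, ‖ψ x‖ = 1
  trivial_on_int : ∀ x : ℚ_[p], ‖x‖ ≤ 1 → ψ x = 1
  nontrivial_on : ∃ x : ℚ_[p], ‖x‖ ≤ (p : ℝ) ∧ ψ x ≠ 1

variable (p : ℕ) [Fact p.Prime]

/-- `ϖ^f = diag(p^{f 0}, …, p^{f (n-1)}, 1)`. -/
noncomputable def varpi (n : ℕ) (f : Fin n → ℤ) : Matrix (Fin (n + 1)) (Fin (n + 1)) ℚ_[p] :=
  Matrix.diagonal (Fin.snoc (fun j => (p : ℚ_[p]) ^ f j) 1)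

/-- `f` is dominant: `f 0 ≥ f 1 ≥ … ≥ f (n-1) ≥ 0`. -/
def Dominant (n : ℕ) (f : Fin n → ℤ) : Prop :=
  Antitone f ∧ ∀ j, 0 ≤ f j

/-- membership in `U`, the group of upper triangular unipotent matrices. -/
def IsUnipUpper (n : ℕ) (u : Matrix (Fin (n + 1)) (Fin (n + 1)) ℚ_[p]) : Prop :=
  (∀ i j, j < i → u i j = 0) ∧ ∀ i, u i i = 1

/-- the extension of `ψ` to `U`: `ψ(u) = ψ(u_{1,2} + u_{2,3} + … + u_{n-1,n})`. -/
noncomputable def psiU (n : ℕ) (ψ : ℚ_[p] → ℂ)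
    (u : Matrix (Fin (n + 1)) (Fin (n + 1)) ℚ_[p]) : ℂ :=
  ψ (∑ i : Fin n, u i.castSucc i.succ)

/-- the block matrix `[[a, b], [c, d]]` with top-left `n × n` block `a`,
top-right column `b`, bottom row `c` and bottom-right scalar `d`. -/
def blk (n : ℕ) (a : Matrix (Fin n) (Fin n) ℚ_[p]) (b c : Fin n → ℚ_[p]) (d : ℚ_[p]) :
    Matrix (Fin (n + 1)) (Fin (n + 1)) ℚ_[p] :=
  Matrix.of (Fin.snoc (fun i => Fin.snoc (a i) (b i)) (Fin.snoc c d))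

/-- membership in `K_m ⊆ GL_{n+1}(ℤ_p)`: integral entries, determinant a unit of `ℤ_p`,
and last row congruent to `(0, …, 0, 1)` modulo `p^m`. -/
def InK (n m : ℕ) (g : Matrix (Fin (n + 1)) (Fin (n + 1)) ℚ_[p]) : Prop :=
  (∀ i j, ‖g i j‖ ≤ 1) ∧ ‖g.det‖ = 1 ∧
    (∀ j : Fin n, ‖g (Fin.last n) j.castSucc‖ ≤ (p : ℝ) ^ (-(m : ℤ))) ∧
    ‖g (Fin.last n) (Fin.last n) - 1‖ ≤ (p : ℝ) ^ (-(m : ℤ))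

/-- `f^i = (1, …, 1, 0, …, 0)` with `i` ones. -/
def fvec (n i : ℕ) : Fin n → ℤ := fun j => if (j : ℕ) < i then 1 else 0

/-- membership in `K_m ∩ ϖ^{f^i} K_m ϖ^{-f^i}`
(`g ∈ ϖ^{f^i} K_m ϖ^{-f^i}` iff `ϖ^{-f^i} g ϖ^{f^i} ∈ K_m`). -/
def InKcap (n m i : ℕ) (g : Matrix (Fin (n + 1)) (Fin (n + 1)) ℚ_[p]) : Prop :=
  InK p n m g ∧ InK p n m (varpi p n (-(fvec n i)) * g * varpi p n (fvec n i))

/-- membership in `H = GL_n(ℤ_p)`. -/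
def InH (n : ℕ) (h : Matrix (Fin n) (Fin n) ℚ_[p]) : Prop :=
  (∀ i j, ‖h i j‖ ≤ 1) ∧ ‖h.det‖ = 1

/-- `𝜛_i = diag(p, …, p, 1, …, 1)` with `i` entries equal to `p`. -/
noncomputable def wSm (n i : ℕ) : Matrix (Fin n) (Fin n) ℚ_[p] :=
  Matrix.diagonal (fun j => if (j : ℕ) < i then (p : ℚ_[p]) else 1)

/-- `𝜛_i⁻¹ = diag(p⁻¹, …, p⁻¹, 1, …, 1)` with `i` entries equal to `p⁻¹`. -/
noncomputable def wSmInv (n i : ℕ) : Matrix (Fin n) (Fin n) ℚ_[p] :=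
  Matrix.diagonal (fun j => if (j : ℕ) < i then (p : ℚ_[p])⁻¹ else 1)

/-- membership in `H ∩ 𝜛_i H 𝜛_i⁻¹` (`a ∈ 𝜛_i H 𝜛_i⁻¹` iff `𝜛_i⁻¹ a 𝜛_i ∈ H`). -/
def InHcap (n i : ℕ) (a : Matrix (Fin n) (Fin n) ℚ_[p]) : Prop :=
  InH p n a ∧ InH p n (wSmInv p n i * a * wSm p n i)

/-- membership in `L_i = (pℤ_p)^i × ℤ_p^{n-i} ⊆ ℤ_p^n`. -/
def InL (n i : ℕ) (v : Fin n → ℚ_[p]) : Prop :=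
  ∀ j : Fin n, if (j : ℕ) < i then ‖v j‖ ≤ (p : ℝ)⁻¹ else ‖v j‖ ≤ 1

/-- `R` is a complete set of representatives for the left cosets
`H/(H ∩ 𝜛_i H 𝜛_i⁻¹)`: `R ⊆ H` and every `h ∈ H` lies in the coset of
exactly one element of `R`. -/
def IsRepsH (n i : ℕ) (R : Set (Matrix (Fin n) (Fin n) ℚ_[p])) : Prop :=
  (∀ r ∈ R, InH p n r) ∧ ∀ h, InH p n h → ∃! r, r ∈ R ∧ InHcap p n i (r⁻¹ * h)

/-- `S` is a complete set of representatives for `ℤ_p^n/(a·L_i)`: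
`S ⊆ ℤ_p^n` and every `v ∈ ℤ_p^n` is congruent modulo `a·L_i` to
exactly one element of `S`. -/
def IsRepsL (n i : ℕ) (a : Matrix (Fin n) (Fin n) ℚ_[p]) (S : Set (Fin n → ℚ_[p])) : Prop :=
  (∀ x ∈ S, ∀ j, ‖x j‖ ≤ 1) ∧
    ∀ v : Fin n → ℚ_[p], (∀ j, ‖v j‖ ≤ 1) →
      ∃! x, x ∈ S ∧ ∃ w, InL p n i w ∧ v - x = a.mulVec w

/-- `I_i`: the set of `ε ∈ {0,1}^n ⊆ ℤ^n` with `Σ_j ε_j = i`. -/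
def ISet (n i : ℕ) : Set (Fin n → ℤ) :=
  {ε | (∀ j, ε j = 0 ∨ ε j = 1) ∧ ∑ j, ε j = (i : ℤ)}

namespace Aux


lemma norm_sum_le {ι : Type*} (s : Finset ι) (f : ι → ℚ_[p]) {C : ℝ} (hC : 0 ≤ C)
    (h : ∀ i ∈ s, ‖f i‖ ≤ C) : ‖∑ i ∈ s, f i‖ ≤ C := by
  classical
  induction s using Finset.induction with
  | empty => simpa using hC
  | insert _ _ hx ih =>
    rw [Finset.sum_insert hx]
    refine le_trans (Padic.nonarchimedean _ _) (max_le (h _ (Finset.mem_insert_self _ _))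
      (ih fun i hi => h i (Finset.mem_insert_of_mem hi)))

lemma norm_det_le_one {N : ℕ} (A : Matrix (Fin N) (Fin N) ℚ_[p]) (h : ∀ i j, ‖A i j‖ ≤ 1) :
    ‖A.det‖ ≤ 1 := by
  rw [Matrix.det_apply]
  refine norm_sum_le p _ _ zero_le_one fun σ _ => ?_
  have hp : ‖∏ i, A (σ i) i‖ ≤ 1 := by
    rw [norm_prod]
    exact Finset.prod_le_one (fun i _ => norm_nonneg _) fun i _ => h _ _
  rcases Int.units_eq_one_or (Equiv.Perm.sign σ) with h1 | h1 <;> rw [h1] <;> simpa using hp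

lemma blk_cc (n : ℕ) (a : Matrix (Fin n) (Fin n) ℚ_[p]) (b c : Fin n → ℚ_[p]) (d : ℚ_[p])
    (j k : Fin n) : blk p n a b c d j.castSucc k.castSucc = a j k := by
  simp [blk]

lemma blk_cl (n : ℕ) (a : Matrix (Fin n) (Fin n) ℚ_[p]) (b c : Fin n → ℚ_[p]) (d : ℚ_[p])
    (j : Fin n) : blk p n a b c d j.castSucc (Fin.last n) = b j := by
  simp [blk]

lemma blk_lc (n : ℕ) (a : Matrix (Fin n) (Fin n) ℚ_[p]) (b c : Fin n → ℚ_[p]) (d : ℚ_[p])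
    (k : Fin n) : blk p n a b c d (Fin.last n) k.castSucc = c k := by
  simp [blk]

lemma blk_ll (n : ℕ) (a : Matrix (Fin n) (Fin n) ℚ_[p]) (b c : Fin n → ℚ_[p]) (d : ℚ_[p]) :
    blk p n a b c d (Fin.last n) (Fin.last n) = d := by
  simp [blk]

lemma pq_ne : (p : ℚ_[p]) ≠ 0 := Nat.cast_ne_zero.mpr (Fact.out : p.Prime).ne_zero

lemma det_varpi_mul (n : ℕ) (f : Fin n → ℤ) :
    (varpi p n (-f)).det * (varpi p n f).det = 1 := by
  rw [varpi, varpi, Matrix.det_diagonal, Matrix.det_diagonal, ← Finset.prod_mul_distrib]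
  refine Finset.prod_eq_one fun x _ => ?_
  induction x using Fin.lastCases with
  | last => simp
  | cast j =>
    simp only [Fin.snoc_castSucc, Pi.neg_apply]
    rw [← zpow_add₀ (pq_ne p), neg_add_cancel, zpow_zero]

lemma det_wSm_mul (n i : ℕ) : (wSmInv p n i).det * (wSm p n i).det = 1 := by
  rw [wSmInv, wSm, Matrix.det_diagonal, Matrix.det_diagonal, ← Finset.prod_mul_distrib]
  refine Finset.prod_eq_one fun x _ => ?_
  by_cases h : (x : ℕ) < i <;> simp [h, inv_mul_cancel₀ (pq_ne p)]

lemma conj_eq (n i : ℕ) (a : Matrix (Fin n) (Fin n) ℚ_[p]) (b c : Fin n → ℚ_[p]) (d : ℚ_[p]) :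
    varpi p n (-(fvec n i)) * blk p n a b c d * varpi p n (fvec n i)
      = blk p n (wSmInv p n i * a * wSm p n i)
          (fun j => (if (j : ℕ) < i then (p : ℚ_[p])⁻¹ else 1) * b j)
          (fun k => c k * (if (k : ℕ) < i then (p : ℚ_[p]) else 1)) d := by
  ext x y
  rw [varpi, varpi, Matrix.mul_diagonal, Matrix.diagonal_mul]
  induction x using Fin.lastCases with
  | last =>
    induction y using Fin.lastCases with
    | last => simp [blk_ll]
    | cast k => simp [blk_lc, fvec, apply_ite (fun t : ℤ => (p:ℚ_[p]) ^ t), mul_comm]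
  | cast j =>
    induction y using Fin.lastCases with
    | last =>
      simp only [Fin.snoc_castSucc, Fin.snoc_last, blk_cl, fvec, Pi.neg_apply]
      by_cases h : (j:ℕ) < i <;> simp [h, mul_comm]
    | cast k =>
      rw [Fin.snoc_castSucc, Fin.snoc_castSucc, blk_cc, blk_cc,
        wSm, wSmInv, Matrix.mul_diagonal, Matrix.diagonal_mul]
      simp only [fvec, Pi.neg_apply]
      by_cases hj : (j:ℕ) < i <;> by_cases hk : (k:ℕ) < i <;> simp [hj, hk]



lemma det_a_unit (n m : ℕ) (hm : 1 ≤ m)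
    (a : Matrix (Fin n) (Fin n) ℚ_[p]) (b c : Fin n → ℚ_[p]) (d : ℚ_[p])
    (hint : ∀ x y, ‖blk p n a b c d x y‖ ≤ 1)
    (hdet : ‖(blk p n a b c d).det‖ = 1)
    (hrow : ∀ j : Fin n, ‖blk p n a b c d (Fin.last n) j.castSucc‖ ≤ (p : ℝ) ^ (-(m : ℤ))) :
    ‖a.det‖ = 1 := by
  have hp1 : (1 : ℝ) < p := by exact_mod_cast (Fact.out : p.Prime).one_lt
  have hp0 : (0 : ℝ) < p := lt_trans one_pos hp1
  have hpm_lt : (p : ℝ) ^ (-(m : ℤ)) < 1 := by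
    rw [← zpow_zero (p : ℝ)]
    exact zpow_lt_zpow_right₀ hp1 (by omega)
  have hadet_le : ‖a.det‖ ≤ 1 :=
    norm_det_le_one p a fun j k => by
      rw [← blk_cc p n a b c d j k]; exact hint _ _
  have hsub : (blk p n a b c d).submatrix (Fin.last n).succAbove (Fin.last n).succAbove = a := by
    ext j k
    simp [Fin.succAbove_last, blk_cc]
  have hexp := Matrix.det_succ_row (blk p n a b c d) (Fin.last n)
  rw [Fin.sum_univ_castSucc, hsub, blk_ll] at hexp
  have hone : ((-1 : ℚ_[p]) ^ (((Fin.last n : Fin (n+1)) : ℕ) + ((Fin.last n : Fin (n+1)) : ℕ))) = 1 :=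
    Even.neg_one_pow ⟨n, by simp⟩
  rw [hone, one_mul] at hexp
  have hS : ‖∑ j : Fin n, (-1 : ℚ_[p]) ^ (((Fin.last n : Fin (n+1)) : ℕ) + ((j.castSucc : Fin (n+1)) : ℕ)) *
      blk p n a b c d (Fin.last n) j.castSucc *
      ((blk p n a b c d).submatrix (Fin.last n).succAbove (j.castSucc).succAbove).det‖
      ≤ (p : ℝ) ^ (-(m : ℤ)) := by
    refine norm_sum_le p _ _ (by positivity) fun j _ => ?_
    rw [norm_mul, norm_mul]
    have hx : ‖(-1 : ℚ_[p]) ^ (((Fin.last n : Fin (n+1)) : ℕ) + ((j.castSucc : Fin (n+1)) : ℕ))‖ = 1 := by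
      simp
    have hz : ‖((blk p n a b c d).submatrix (Fin.last n).succAbove (j.castSucc).succAbove).det‖ ≤ 1 :=
      norm_det_le_one p _ fun x y => by rw [Matrix.submatrix_apply]; exact hint _ _
    rw [hx, one_mul]
    calc ‖blk p n a b c d (Fin.last n) j.castSucc‖ * ‖_‖
        ≤ (p : ℝ) ^ (-(m : ℤ)) * 1 := mul_le_mul (hrow j) hz (norm_nonneg _) (by positivity)
      _ = (p : ℝ) ^ (-(m : ℤ)) := mul_one _
  have hda : (1 : ℝ) ≤ ‖d * a.det‖ := by
    have h1 : ‖(blk p n a b c d).det‖ ≤ max ‖∑ j : Fin n, (-1 : ℚ_[p]) ^ (((Fin.last n : Fin (n+1)) : ℕ) + ((j.castSucc : Fin (n+1)) : ℕ)) *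
      blk p n a b c d (Fin.last n) j.castSucc *
      ((blk p n a b c d).submatrix (Fin.last n).succAbove (j.castSucc).succAbove).det‖ ‖d * a.det‖ := by
      rw [hexp]
      exact Padic.nonarchimedean _ _
    rw [hdet] at h1
    rcases le_max_iff.mp h1 with h | h
    · exact absurd (lt_of_le_of_lt (le_trans h hS) hpm_lt) (lt_irrefl 1)
    · exact h
  rw [norm_mul] at hda
  have hdle : ‖d‖ ≤ 1 := by rw [← blk_ll p n a b c d]; exact hint _ _
  nlinarith [norm_nonneg d, norm_nonneg a.det]


end Aux

/-- for `g = [[a,b],[c,d]] ∈ K_m`, one has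
`g ∈ K_m ∩ ϖ^{f^i} K_m ϖ^{-f^i}` iff `a ∈ H ∩ 𝜛_i H 𝜛_i⁻¹` and `b ∈ L_i`. -/
theorem mem_K_inter_conj_iff
    (p : ℕ) [Fact p.Prime] (n : ℕ) (hn : 1 ≤ n) (m : ℕ) (hm : 1 ≤ m)
    (i : ℕ) (hi1 : 1 ≤ i) (hi2 : i ≤ n)
    (a : Matrix (Fin n) (Fin n) ℚ_[p]) (b c : Fin n → ℚ_[p]) (d : ℚ_[p])
    (hg : InK p n m (blk p n a b c d)) :
    InKcap p n m i (blk p n a b c d) ↔ InHcap p n i a ∧ InL p n i b := by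
  obtain ⟨hint, hdet, hrow, hd⟩ := hg
  have hp1 : (1 : ℝ) < p := by exact_mod_cast (Fact.out : p.Prime).one_lt
  have hp0 : (0 : ℝ) < p := lt_trans one_pos hp1
  have hdeta : ‖a.det‖ = 1 := Aux.det_a_unit p n m hm a b c d hint hdet hrow
  have hconj := Aux.conj_eq p n i a b c d
  have hdet_conj_a : (wSmInv p n i * a * wSm p n i).det = a.det := by
    rw [Matrix.det_mul, Matrix.det_mul, mul_right_comm, Aux.det_wSm_mul, one_mul]
  have hdet_conj_g : (varpi p n (-(fvec n i)) * blk p n a b c d * varpi p n (fvec n i)).det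
      = (blk p n a b c d).det := by
    rw [Matrix.det_mul, Matrix.det_mul, mul_right_comm, Aux.det_varpi_mul, one_mul]
  have hc : ∀ k : Fin n, ‖c k‖ ≤ (p : ℝ) ^ (-(m : ℤ)) := fun k => by
    have := hrow k; rwa [Aux.blk_lc] at this
  have hd' : ‖d - 1‖ ≤ (p : ℝ) ^ (-(m : ℤ)) := by
    have := hd; rwa [Aux.blk_ll] at this
  have hwle : ∀ k : Fin n, ‖(if (k : ℕ) < i then (p : ℚ_[p]) else 1)‖ ≤ 1 := fun k => by
    split
    · rw [Padic.norm_p]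
      exact inv_le_one_of_one_le₀ hp1.le
    · simp
  have hpinv : ‖((p : ℚ_[p])⁻¹)‖ = (p : ℝ) := by
    rw [norm_inv, Padic.norm_p, inv_inv]
  constructor
  · rintro ⟨-, hint', -, -, -⟩
    rw [hconj] at hint'
    refine ⟨⟨⟨fun j k => by rw [← Aux.blk_cc p n a b c d j k]; exact hint _ _, hdeta⟩,
      ⟨fun j k => by
        have := hint' j.castSucc k.castSucc
        rwa [Aux.blk_cc] at this, by rw [hdet_conj_a]; exact hdeta⟩⟩, ?_⟩
    intro j
    have h1 := hint' j.castSucc (Fin.last n)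
    rw [Aux.blk_cl] at h1
    by_cases h : (j : ℕ) < i
    · rw [if_pos h] at h1 ⊢
      rw [norm_mul, hpinv] at h1
      rw [inv_eq_one_div, le_div_iff₀ hp0]
      have := mul_comm (p : ℝ) ‖b j‖
      linarith
    · rw [if_neg h] at h1 ⊢
      rwa [one_mul] at h1
  · rintro ⟨⟨⟨-, -⟩, ⟨ha'int, -⟩⟩, hb⟩
    refine ⟨⟨hint, hdet, hrow, hd⟩, ?_⟩
    rw [hconj]
    refine ⟨?_, ?_, ?_, ?_⟩
    · intro x y
      induction x using Fin.lastCases with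
      | last =>
        induction y using Fin.lastCases with
        | last => rw [Aux.blk_ll]; rw [← Aux.blk_ll p n a b c d]; exact hint _ _
        | cast k =>
          rw [Aux.blk_lc, norm_mul]
          have h1 : ‖c k‖ ≤ 1 := by rw [← Aux.blk_lc p n a b c d k]; exact hint _ _
          calc ‖c k‖ * ‖(if (k : ℕ) < i then (p : ℚ_[p]) else 1)‖
              ≤ 1 * 1 := mul_le_mul h1 (hwle k) (norm_nonneg _) zero_le_one
            _ = 1 := mul_one 1
      | cast j =>
        induction y using Fin.lastCases with
        | last =>
          rw [Aux.blk_cl]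
          have hbj := hb j
          by_cases h : (j : ℕ) < i
          · rw [if_pos h] at hbj ⊢
            rw [norm_mul, hpinv]
            calc (p : ℝ) * ‖b j‖ ≤ (p : ℝ) * (p : ℝ)⁻¹ := by
                  exact mul_le_mul_of_nonneg_left hbj hp0.le
              _ = 1 := mul_inv_cancel₀ hp0.ne'
          · rw [if_neg h] at hbj ⊢
            rwa [one_mul]
        | cast k =>
          rw [Aux.blk_cc]
          exact ha'int j k
    · rw [← hconj, hdet_conj_g]; exact hdet
    · intro k
      rw [Aux.blk_lc, norm_mul]
      calc ‖c k‖ * ‖(if (k : ℕ) < i then (p : ℚ_[p]) else 1)‖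
          ≤ (p : ℝ) ^ (-(m : ℤ)) * 1 := mul_le_mul (hc k) (hwle k) (norm_nonneg _) (by positivity)
        _ = (p : ℝ) ^ (-(m : ℤ)) := mul_one _
    · rw [Aux.blk_ll]; exact hd'
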